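/- Let $n \geq 2$, $R_2 > R_1 > 0$, and set $\Omega_0 = B_{R_2} \setminus \overline{B_{R_1}}$ (concentric annulus). The function $u(x) = \left(|x| + \frac{R_1^n}{(n-1)|x|^{n-1}}\right)\frac{x_i}{|x|}$ satisfies the Steklov--Neumann eigenvalue equations: $\Delta u = 0$ in $\Omega_0$, $\partial u/\partial\nu = 0$ on $\partial B_{R_1}$, and $\partial u/\partial\nu = \mu_1 u$ on $\partial B_{R_2}$, where $\mu_1 = \frac{(n-1)\left(\left(\frac{R_2}{R_1}\right)^{n} - 1\right)}{R_2\left((n-1)\left(\frac{R_2}{R_1}\right)^{n} + 1\right)}$. -/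

import Mathlib

open Real

/-- `u` is harmonic on `s`: twice continuously differentiable with vanishing Laplacian. -/
def IsHarmonicOn {n : ℕ} (u : EuclideanSpace ℝ (Fin n) → ℝ)
    (s : Set (EuclideanSpace ℝ (Fin n))) : Prop :=
  ContDiffOn ℝ 2 u s ∧
    ∀ x ∈ s,
      (∑ i : Fin n,
        fderiv ℝ (fun y => fderiv ℝ u y (EuclideanSpace.single i 1)) x
          (EuclideanSpace.single i 1)) = 0

namespace Stmt8Aux

variable {n : ℕ}

/-- squared norm as a sum of products of coordinates -/
def q (x : EuclideanSpace ℝ (Fin n)) : ℝ := ∑ j, x j * x j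

lemma q_eq (x : EuclideanSpace ℝ (Fin n)) : q x = ‖x‖ ^ 2 := by
  rw [EuclideanSpace.norm_eq, Real.sq_sqrt (by positivity)]
  simp [q, Real.norm_eq_abs, sq_abs, sq]

lemma q_pos {x : EuclideanSpace ℝ (Fin n)} (hx : x ≠ 0) : 0 < q x := by
  rw [q_eq]
  have : 0 < ‖x‖ := norm_pos_iff.2 hx
  positivity

/-- derivative of q -/
noncomputable def Dq (x : EuclideanSpace ℝ (Fin n)) : EuclideanSpace ℝ (Fin n) →L[ℝ] ℝ :=
  ∑ j, (2 * x j) • (EuclideanSpace.proj j : EuclideanSpace ℝ (Fin n) →L[ℝ] ℝ)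

lemma Dq_apply (x y : EuclideanSpace ℝ (Fin n)) : Dq x y = ∑ j, 2 * x j * y j := by
  simp [Dq, mul_assoc]

lemma Dq_single (x : EuclideanSpace ℝ (Fin n)) (j : Fin n) :
    Dq x (EuclideanSpace.single j 1) = 2 * x j := by
  rw [Dq_apply]
  simp [EuclideanSpace.single_apply]

lemma Dq_self (x : EuclideanSpace ℝ (Fin n)) : Dq x x = 2 * q x := by
  rw [Dq_apply, q, Finset.mul_sum]
  exact Finset.sum_congr rfl fun j _ => by ring

lemma hasFDerivAt_q (x : EuclideanSpace ℝ (Fin n)) : HasFDerivAt q (Dq x) x := by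
  have h : ∀ j ∈ Finset.univ, HasFDerivAt (fun y : EuclideanSpace ℝ (Fin n) => y j * y j)
      ((2 * x j) • (EuclideanSpace.proj j : EuclideanSpace ℝ (Fin n) →L[ℝ] ℝ)) x := by
    intro j _
    have := ((EuclideanSpace.proj j (𝕜 := ℝ)).hasFDerivAt (x := x)).mul
      ((EuclideanSpace.proj j (𝕜 := ℝ)).hasFDerivAt (x := x))
    refine this.congr_fderiv ?_
    rw [two_mul, add_smul]
    rfl
  exact HasFDerivAt.fun_sum h

lemma contDiff_q : ContDiff ℝ 2 (q (n := n)) :=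
  ContDiff.sum fun j _ =>
    ((EuclideanSpace.proj j (𝕜 := ℝ)).contDiff).mul ((EuclideanSpace.proj j (𝕜 := ℝ)).contDiff)

lemma hasFDerivAt_qp (p : ℝ) {x : EuclideanSpace ℝ (Fin n)} (hx : x ≠ 0) :
    HasFDerivAt (fun y => q y ^ p) ((p * q x ^ (p - 1)) • Dq x) x :=
  (hasFDerivAt_q x).rpow_const (Or.inl (q_pos hx).ne')

/-- derivative of `fun y => y i * (1 + c * q y ^ e)` -/
noncomputable def Du (i : Fin n) (c e : ℝ) (x : EuclideanSpace ℝ (Fin n)) :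
    EuclideanSpace ℝ (Fin n) →L[ℝ] ℝ :=
  x i • (c • ((e * q x ^ (e - 1)) • Dq x)) +
    (1 + c * q x ^ e) • (EuclideanSpace.proj i : EuclideanSpace ℝ (Fin n) →L[ℝ] ℝ)

lemma Du_apply (i : Fin n) (c e : ℝ) (x y : EuclideanSpace ℝ (Fin n)) :
    Du i c e x y = x i * (c * (e * q x ^ (e - 1) * Dq x y)) + (1 + c * q x ^ e) * y i := by
  simp [Du, mul_assoc]

lemma hasFDerivAt_v (i : Fin n) (c e : ℝ) {x : EuclideanSpace ℝ (Fin n)} (hx : x ≠ 0) :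
    HasFDerivAt (fun y : EuclideanSpace ℝ (Fin n) => y i * (1 + c * q y ^ e))
      (Du i c e x) x := by
  have h2 := (((hasFDerivAt_qp e hx).const_mul c).const_add 1)
  exact (EuclideanSpace.proj i (𝕜 := ℝ)).hasFDerivAt (x := x) |>.mul h2

lemma lap_term (i j : Fin n) (c e : ℝ) {x : EuclideanSpace ℝ (Fin n)} (hx : x ≠ 0) :
    fderiv ℝ (fun y => Du i c e y (EuclideanSpace.single j 1)) x (EuclideanSpace.single j 1)
      = (4 * c * e * (e - 1) * q x ^ (e - 2) * x i) * (x j * x j)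
        + (if i = j then (4 * c * e * q x ^ (e - 1)) * x j else 0)
        + 2 * c * e * q x ^ (e - 1) * x i := by
  have hψ : (fun y => Du i c e y (EuclideanSpace.single j 1)) =
      (fun y : EuclideanSpace ℝ (Fin n) =>
        y i * (c * (e * q y ^ (e - 1) * (2 * y j))) +
          (1 + c * q y ^ e) * (EuclideanSpace.single j 1) i) := by
    funext y; rw [Du_apply, Dq_single]
  have h1 : HasFDerivAt
      (fun y : EuclideanSpace ℝ (Fin n) => y i * (c * (e * q y ^ (e - 1) * (2 * y j))))
      _ x :=
    (EuclideanSpace.proj i (𝕜 := ℝ)).hasFDerivAt.mul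
      ((((hasFDerivAt_qp (e - 1) hx).const_mul e).mul
        (((EuclideanSpace.proj j (𝕜 := ℝ)).hasFDerivAt).const_mul 2)).const_mul c)
  have h2 : HasFDerivAt
      (fun y : EuclideanSpace ℝ (Fin n) => (1 + c * q y ^ e) * (EuclideanSpace.single j 1) i)
      _ x :=
    (((hasFDerivAt_qp e hx).const_mul c).const_add 1).mul_const ((EuclideanSpace.single j 1) i)
  rw [hψ, (h1.fun_add h2).fderiv]
  have hd : ((e - 1) - 1 : ℝ) = e - 2 := by ring
  simp only [ContinuousLinearMap.add_apply, ContinuousLinearMap.smul_apply,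
    ContinuousLinearMap.coe_smul', Pi.smul_apply, Dq_single, PiLp.proj_apply,
    smul_eq_mul, EuclideanSpace.single_apply, hd]
  by_cases hij : i = j
  · subst hij; simp; ring
  · simp [hij]; ring

lemma lap_sum (i : Fin n) (c : ℝ) {x : EuclideanSpace ℝ (Fin n)} (hx : x ≠ 0) :
    ∑ j, fderiv ℝ (fun y => Du i c (-(n : ℝ)/2) y (EuclideanSpace.single j 1)) x
        (EuclideanSpace.single j 1) = 0 := by
  have hsum : ∀ j ∈ Finset.univ,
      fderiv ℝ (fun y => Du i c (-(n : ℝ)/2) y (EuclideanSpace.single j 1)) x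
        (EuclideanSpace.single j 1)
      = (4 * c * (-(n : ℝ)/2) * ((-(n : ℝ)/2) - 1) * q x ^ ((-(n : ℝ)/2) - 2) * x i) * (x j * x j)
        + (if i = j then (4 * c * (-(n : ℝ)/2) * q x ^ ((-(n : ℝ)/2) - 1)) * x j else 0)
        + 2 * c * (-(n : ℝ)/2) * q x ^ ((-(n : ℝ)/2) - 1) * x i :=
    fun j _ => lap_term i j c (-(n : ℝ)/2) hx
  rw [Finset.sum_congr rfl hsum]
  rw [Finset.sum_add_distrib, Finset.sum_add_distrib, ← Finset.mul_sum,
    Finset.sum_ite_eq, Finset.sum_const]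
  simp only [Finset.mem_univ, if_true, Finset.card_univ, Fintype.card_fin, nsmul_eq_mul]
  have h1 : q x ^ ((-(n : ℝ)/2) - 2) * q x = q x ^ ((-(n : ℝ)/2) - 1) := by
    rw [← Real.rpow_add_one (q_pos hx).ne' ((-(n : ℝ)/2) - 2)]
    congr 1; ring
  have hq : (∑ j, x j * x j) = q x := rfl
  rw [hq]
  linear_combination (4 * c * (-(n : ℝ)/2) * ((-(n : ℝ)/2) - 1) * x i) * h1

lemma rpow_sq_neg_half (r : ℝ) (hr : 0 < r) (m : ℕ) :
    (r ^ 2 : ℝ) ^ (-(m : ℝ)/2) = (r ^ m)⁻¹ := by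
  have h1 : (r : ℝ) ^ 2 = r ^ ((2 : ℕ) : ℝ) := (Real.rpow_natCast r 2).symm
  rw [h1, ← Real.rpow_mul hr.le,
    show ((2 : ℕ) : ℝ) * (-(m : ℝ)/2) = -(m : ℝ) by push_cast; ring,
    Real.rpow_neg hr.le, Real.rpow_natCast]

end Stmt8Aux

open Stmt8Aux

theorem stmt8 (n : ℕ) (hn : 2 ≤ n) (R1 R2 : ℝ) (hR1 : 0 < R1) (hR12 : R1 < R2)
    (i : Fin n) :
    letI u : EuclideanSpace ℝ (Fin n) → ℝ := fun x =>
      (‖x‖ + R1 ^ n / (((n : ℝ) - 1) * ‖x‖ ^ (n - 1))) * (x i / ‖x‖)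
    letI μ1 : ℝ :=
      ((n : ℝ) - 1) * ((R2 / R1) ^ n - 1) / (R2 * (((n : ℝ) - 1) * (R2 / R1) ^ n + 1))
    IsHarmonicOn u {x : EuclideanSpace ℝ (Fin n) | R1 < ‖x‖ ∧ ‖x‖ < R2} ∧
    (∀ x : EuclideanSpace ℝ (Fin n), ‖x‖ = R1 → fderiv ℝ u x x = 0) ∧
    (∀ x : EuclideanSpace ℝ (Fin n), ‖x‖ = R2 →
      fderiv ℝ u x (R2⁻¹ • x) = μ1 * u x) := by
  set u : EuclideanSpace ℝ (Fin n) → ℝ := fun x =>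
      (‖x‖ + R1 ^ n / (((n : ℝ) - 1) * ‖x‖ ^ (n - 1))) * (x i / ‖x‖) with hu
  have hm : (0 : ℝ) < (n : ℝ) - 1 := by
    have : (2 : ℝ) ≤ (n : ℝ) := by exact_mod_cast hn
    linarith
  set c : ℝ := R1 ^ n / ((n : ℝ) - 1) with hc
  set e : ℝ := -(n : ℝ)/2 with he
  set v : EuclideanSpace ℝ (Fin n) → ℝ := fun y => y i * (1 + c * q y ^ e) with hv
  -- pointwise equality of u and v away from 0
  have huv : ∀ y : EuclideanSpace ℝ (Fin n), y ≠ 0 → u y = v y := by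
    intro y hy
    have hr : 0 < ‖y‖ := norm_pos_iff.2 hy
    have hqe : q y ^ e = (‖y‖ ^ n)⁻¹ := by
      rw [q_eq, he]; exact rpow_sq_neg_half ‖y‖ hr n
    have hp : ‖y‖ ^ (n - 1) = ‖y‖ ^ n / ‖y‖ := by
      rw [eq_div_iff hr.ne', ← pow_succ, Nat.sub_add_cancel (le_trans one_le_two hn)]
    show (‖y‖ + R1 ^ n / (((n : ℝ) - 1) * ‖y‖ ^ (n - 1))) * (y i / ‖y‖)
        = y i * (1 + c * q y ^ e)
    rw [hqe, hp, hc]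
    have hA : (0 : ℝ) < ‖y‖ ^ n := pow_pos hr n
    field_simp
  have hEv : ∀ x : EuclideanSpace ℝ (Fin n), x ≠ 0 → u =ᶠ[nhds x] v := by
    intro x hx
    exact Filter.eventuallyEq_of_mem (isOpen_compl_singleton.mem_nhds hx)
      (fun y hy => huv y hy)
  have hfd : ∀ y : EuclideanSpace ℝ (Fin n), y ≠ 0 → fderiv ℝ u y = Du i c e y := by
    intro y hy
    rw [(hEv y hy).fderiv_eq, (hasFDerivAt_v i c e hy).fderiv]
  refine ⟨⟨?_, ?_⟩, ?_, ?_⟩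
  · -- ContDiffOn
    intro x hx
    have hx0 : x ≠ 0 := by
      intro h0
      rw [h0] at hx
      simp at hx
      linarith [hx.1]
    have hvc : ContDiffAt ℝ 2 v x := by
      exact ((EuclideanSpace.proj i (𝕜 := ℝ)).contDiff.contDiffAt).mul
        (contDiffAt_const.add (contDiffAt_const.mul
          (contDiff_q.contDiffAt.rpow_const_of_ne (q_pos hx0).ne')))
    exact (hvc.congr_of_eventuallyEq (hEv x hx0)).contDiffWithinAt
  · -- Laplacian
    intro x hx
    have hx0 : x ≠ 0 := by
      intro h0
      rw [h0] at hx
      simp at hx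
      linarith [hx.1]
    have hcongr : ∀ j : Fin n,
        fderiv ℝ (fun y => fderiv ℝ u y (EuclideanSpace.single j 1)) x
          (EuclideanSpace.single j 1)
        = fderiv ℝ (fun y => Du i c e y (EuclideanSpace.single j 1)) x
          (EuclideanSpace.single j 1) := by
      intro j
      have : (fun y => fderiv ℝ u y (EuclideanSpace.single j 1)) =ᶠ[nhds x]
          (fun y => Du i c e y (EuclideanSpace.single j 1)) :=
        Filter.eventuallyEq_of_mem (isOpen_compl_singleton.mem_nhds hx0)
          (fun y hy => by rw [hfd y hy])
      rw [this.fderiv_eq]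
    rw [Finset.sum_congr rfl fun j _ => hcongr j, he]
    exact lap_sum i c hx0
  · -- Neumann condition on inner sphere
    intro x hxR
    have hx0 : x ≠ 0 := by
      intro h0; rw [h0, norm_zero] at hxR; linarith
    have hQ0 : q x ≠ 0 := (q_pos hx0).ne'
    have hqe : q x ^ e = (R1 ^ n)⁻¹ := by
      rw [q_eq, hxR, he]; exact rpow_sq_neg_half R1 hR1 n
    have h1 : q x ^ (e - 1) * q x = q x ^ e := by
      rw [← Real.rpow_add_one hQ0 (e - 1)]; congr 1; ring
    have hQ : q x = R1 ^ 2 := by rw [q_eq, hxR]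
    have h2 : q x ^ (e - 1) = (R1 ^ n)⁻¹ / R1 ^ 2 := by
      rw [eq_div_iff (by positivity : (R1 : ℝ) ^ 2 ≠ 0), ← hQ, h1, hqe]
    rw [hfd x hx0, Du_apply, Dq_self, h2, hqe, hQ, hc]
    have hA : (0 : ℝ) < R1 ^ n := pow_pos hR1 n
    field_simp
    ring
  · -- Steklov condition on outer sphere
    intro x hxR
    have hR2 : 0 < R2 := lt_trans hR1 hR12
    have hx0 : x ≠ 0 := by
      intro h0; rw [h0, norm_zero] at hxR; linarith
    have hQ0 : q x ≠ 0 := (q_pos hx0).ne'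
    have hqe : q x ^ e = (R2 ^ n)⁻¹ := by
      rw [q_eq, hxR, he]; exact rpow_sq_neg_half R2 hR2 n
    have h1 : q x ^ (e - 1) * q x = q x ^ e := by
      rw [← Real.rpow_add_one hQ0 (e - 1)]; congr 1; ring
    have hQ : q x = R2 ^ 2 := by rw [q_eq, hxR]
    have h2 : q x ^ (e - 1) = (R2 ^ n)⁻¹ / R2 ^ 2 := by
      rw [eq_div_iff (by positivity : (R2 : ℝ) ^ 2 ≠ 0), ← hQ, h1, hqe]
    rw [hfd x hx0, map_smul, smul_eq_mul, Du_apply, Dq_self, h2, hqe, hQ, huv x hx0]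
    show R2⁻¹ * (x i * (c * (e * ((R2 ^ n)⁻¹ / R2 ^ 2) * (2 * R2 ^ 2)))
        + (1 + c * (R2 ^ n)⁻¹) * x i)
      = ((n : ℝ) - 1) * ((R2 / R1) ^ n - 1) / (R2 * (((n : ℝ) - 1) * (R2 / R1) ^ n + 1))
        * (x i * (1 + c * q x ^ e))
    rw [hqe, hc, he, div_pow]
    have hA : (0 : ℝ) < R2 ^ n := pow_pos hR2 n
    have hB : (0 : ℝ) < R1 ^ n := pow_pos hR1 n
    have hden : (0 : ℝ) < ((n : ℝ) - 1) * (R2 ^ n / R1 ^ n) + 1 := by positivity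
    field_simp
    ring
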